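/- arXiv:1703.07145 — 3 statements merged into one kernel-verified Lean document; each statement's English description precedes it below -/
import Mathlib

section
/- For every finite connected simple graph G with nonempty vertex set, one has ∑_{v ∈ V(G)} deg(v)·(deg(v) − 2) ≥ −2, where deg(v) denotes the degree of v in G and the sum is taken over all vertices (as integers). -/
open Finset

lemma aux_card_le_edges {V : Type*} [Fintype V] [Nonempty V]
    (G : SimpleGraph V) [DecidableRel G.Adj] (hG : G.Connected) :
    Fintype.card V ≤ G.edgeFinset.card + 1 := by
  classical
  obtain ⟨r⟩ := ‹Nonempty V›
  have hpar : ∀ v : V, v ≠ r → ∃ w : V, G.Adj v w ∧ G.dist w r < G.dist v r := by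
    intro v hv
    obtain ⟨p, hp⟩ := hG.exists_walk_length_eq_dist v r
    cases p with
    | nil => exact absurd rfl hv
    | @cons _ w _ h q =>
      refine ⟨w, h, ?_⟩
      have h1 : G.dist w r ≤ q.length := G.dist_le q
      simp only [SimpleGraph.Walk.length_cons] at hp
      omega
  choose! par hadj hlt using hpar
  have hcard : (Finset.univ.erase r).card ≤ G.edgeFinset.card := by
    apply Finset.card_le_card_of_injOn (fun v => s(v, par v))
    · intro v hv
      have hv' : v ≠ r := Finset.ne_of_mem_erase hv
      simp only [Finset.mem_coe, SimpleGraph.mem_edgeFinset, SimpleGraph.mem_edgeSet]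
      exact hadj v hv'
    · intro v hv w hw hvw
      have hv' : v ≠ r := Finset.ne_of_mem_erase hv
      have hw' : w ≠ r := Finset.ne_of_mem_erase hw
      simp only [Sym2.eq_iff] at hvw
      rcases hvw with ⟨h1, _⟩ | ⟨h1, h2⟩
      · exact h1
      · exfalso
        have l1 := hlt v hv'
        have l2 := hlt w hw'
        rw [h2] at l1
        rw [← h1] at l2
        omega
  have : (Finset.univ.erase r).card = Fintype.card V - 1 := by
    rw [Finset.card_erase_of_mem (Finset.mem_univ r), Finset.card_univ]
  have hpos : 1 ≤ Fintype.card V := Fintype.card_pos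
  omega

/-- For every finite connected simple graph `G` on a nonempty vertex set,
`∑_{v} deg(v)·(deg(v) − 2) ≥ −2` (as integers). -/
theorem sum_degree_mul_degree_sub_two_ge_neg_two
    {V : Type*} [Fintype V] [Nonempty V] (G : SimpleGraph V) [DecidableRel G.Adj]
    (hG : G.Connected) :
    (-2 : ℤ) ≤ ∑ v : V, (G.degree v : ℤ) * ((G.degree v : ℤ) - 2) := by
  classical
  have hpt : ∀ v : V, ((G.degree v : ℤ) - 2) ≤ (G.degree v : ℤ) * ((G.degree v : ℤ) - 2) := by
    intro v
    have h : (0:ℤ) ≤ ((G.degree v : ℤ) - 1) * ((G.degree v : ℤ) - 2) := by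
      rcases le_or_gt (G.degree v : ℤ) 1 with h | h
      · have := mul_nonneg (by omega : (0:ℤ) ≤ 1 - (G.degree v : ℤ))
          (by omega : (0:ℤ) ≤ 2 - (G.degree v : ℤ))
        nlinarith
      · exact mul_nonneg (by omega) (by omega)
    nlinarith
  have hsum : ∑ v : V, ((G.degree v : ℤ) - 2) ≤
      ∑ v : V, (G.degree v : ℤ) * ((G.degree v : ℤ) - 2) :=
    Finset.sum_le_sum fun v _ => hpt v
  have hdeg : ∑ v : V, (G.degree v : ℤ) = 2 * (G.edgeFinset.card : ℤ) := by
    have := G.sum_degrees_eq_twice_card_edges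
    exact_mod_cast congrArg (Nat.cast : ℕ → ℤ) this
  have hE := aux_card_le_edges G hG
  have hsum2 : ∑ v : V, ((G.degree v : ℤ) - 2) =
      2 * (G.edgeFinset.card : ℤ) - 2 * (Fintype.card V : ℤ) := by
    rw [Finset.sum_sub_distrib, hdeg, Finset.sum_const, Finset.card_univ]
    ring
  have : (Fintype.card V : ℤ) ≤ (G.edgeFinset.card : ℤ) + 1 := by exact_mod_cast hE
  linarith
end

section
/- Let G be a finite simple graph on vertex set V with degree function d, let ℓ = ∑_{v∈V} d(v) and assume ℓ > 0. Let C ⊆ V be the vertex set of a connected component of G, and assume ∑_{v∉C} d(v) > 0. Define ν = (∑_{v∈V} d(v)(d(v)−1))/ℓ and ν̃ = (∑_{v∉C} d(v)(d(v)−1))/(∑_{v∉C} d(v)). Then (ν̃ − 1)·(1 − (∑_{v∈C} d(v))/ℓ) ≤ ν − 1 + 2/ℓ. -/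
open Finset

section Aux

variable {V : Type*} [Fintype V] (G : SimpleGraph V) [DecidableRel G.Adj]

/-- In a connected component, the sum of degrees dominates `2 * (card - 2)`-ish:
precisely `2 * |C| ≤ (∑_{v∈C} d v) + 2`. -/
lemma component_degree_sum_lower
    (C : Set V) [DecidablePred (· ∈ C)]
    (hC : ∃ c : G.ConnectedComponent, C = c.supp) :
    2 * (univ.filter (· ∈ C)).card ≤ (∑ v ∈ univ.filter (· ∈ C), G.degree v) + 2 := by
  classical
  obtain ⟨c, rfl⟩ := hC
  obtain ⟨root, hroot'⟩ := c.exists_rep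
  have hroot : G.connectedComponentMk root = c := hroot'
  have hrootC : root ∈ c.supp := by
    simp [SimpleGraph.ConnectedComponent.mem_supp_iff, hroot]
  -- membership in the component is closed under adjacency
  have hclosed : ∀ {x y : V}, x ∈ c.supp → G.Adj x y → y ∈ c.supp := by
    intro x y hx hxy
    rw [SimpleGraph.ConnectedComponent.mem_supp_iff] at hx ⊢
    exact (SimpleGraph.ConnectedComponent.connectedComponentMk_eq_of_adj hxy).symm.trans hx
  -- every non-root vertex of the component has a predecessor at distance one less
  have hpredex : ∀ v : V, ∃ u : V, v ∈ c.supp → v ≠ root →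
      G.Adj u v ∧ G.dist root u + 1 = G.dist root v := by
    intro v
    by_cases hv : v ∈ c.supp ∧ v ≠ root
    · obtain ⟨hv1, hv2⟩ := hv
      have hreach : G.Reachable root v := by
        rw [SimpleGraph.ConnectedComponent.mem_supp_iff] at hv1
        exact SimpleGraph.ConnectedComponent.exact (by rw [hv1, hroot])
      obtain ⟨p, hp⟩ := hreach.exists_walk_length_eq_dist
      have hpos : 0 < G.dist root v := hreach.pos_dist_of_ne (Ne.symm hv2)
      obtain ⟨w, hadj, q, hq⟩ := SimpleGraph.Walk.exists_eq_cons_of_ne hv2 p.reverse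
      refine ⟨w, fun _ _ => ⟨hadj.symm, ?_⟩⟩
      have hlen : q.length + 1 = G.dist root v := by
        have := congrArg SimpleGraph.Walk.length hq
        simp only [SimpleGraph.Walk.length_reverse, SimpleGraph.Walk.length_cons] at this
        omega
      have h1 : G.dist root w ≤ q.length := by
        have := G.dist_le q.reverse
        simpa using this
      have h2 : G.dist root v ≤ G.dist root w + 1 := by
        have hreachw : G.Reachable root w := hreach.trans ⟨SimpleGraph.Walk.cons hadj SimpleGraph.Walk.nil⟩
        obtain ⟨s, hs⟩ := hreachw.exists_walk_length_eq_dist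
        have := G.dist_le (s.concat hadj.symm)
        rwa [SimpleGraph.Walk.length_concat, hs] at this
      omega
    · exact ⟨v, fun h1 h2 => absurd ⟨h1, h2⟩ hv⟩
  choose pred hpred using hpredex
  -- the subgraph consisting of edges inside the component
  let G' : SimpleGraph V :=
    { Adj := fun x y => G.Adj x y ∧ x ∈ c.supp ∧ y ∈ c.supp
      symm := ⟨fun x y ⟨h1, h2, h3⟩ => ⟨h1.symm, h3, h2⟩⟩
      loopless := ⟨fun x ⟨h1, _⟩ => G.loopless.irrefl x h1⟩ }
  haveI : DecidableRel G'.Adj := fun x y => by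
    unfold G'; infer_instance
  -- degrees of G'
  have hdeg : ∀ v ∈ c.supp, G'.degree v = G.degree v := by
    intro v hv
    unfold SimpleGraph.degree
    congr 1
    ext x
    simp only [SimpleGraph.mem_neighborFinset]
    exact ⟨fun h => h.1, fun h => ⟨h, hv, hclosed hv h⟩⟩
  have hdeg0 : ∀ v, v ∉ c.supp → G'.degree v = 0 := by
    intro v hv
    unfold SimpleGraph.degree
    rw [Finset.card_eq_zero]
    ext x
    simp only [SimpleGraph.mem_neighborFinset, Finset.notMem_empty, iff_false]
    exact fun h => hv h.2.1
  -- handshake for G' : sum of degrees over C equals twice edge count of G'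
  have hhand : ∑ v ∈ univ.filter (· ∈ c.supp), G.degree v = 2 * G'.edgeFinset.card := by
    have h1 : ∑ v, G'.degree v = ∑ v ∈ univ.filter (· ∈ c.supp), G.degree v := by
      rw [← Finset.sum_filter_add_sum_filter_not univ (· ∈ c.supp) (fun v => G'.degree v)]
      have e1 : ∑ v ∈ univ.filter (· ∈ c.supp), G'.degree v
          = ∑ v ∈ univ.filter (· ∈ c.supp), G.degree v :=
        Finset.sum_congr rfl fun v hv => hdeg v (Finset.mem_filter.mp hv).2
      have e2 : ∑ v ∈ univ.filter (fun v => ¬ v ∈ c.supp), G'.degree v = 0 :=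
        Finset.sum_eq_zero fun v hv => hdeg0 v (Finset.mem_filter.mp hv).2
      rw [e1, e2, add_zero]
    rw [← h1, SimpleGraph.sum_degrees_eq_twice_card_edges]
  -- injection from non-root vertices of C into edges of G'
  have hinj : ((univ.filter (· ∈ c.supp)).erase root).card ≤ G'.edgeFinset.card := by
    apply Finset.card_le_card_of_injOn (fun v => s(pred v, v))
    · intro v hv
      obtain ⟨hvne, hvC⟩ := Finset.mem_erase.mp hv
      have hvC' : v ∈ c.supp := (Finset.mem_filter.mp hvC).2
      obtain ⟨hadj, -⟩ := hpred v hvC' hvne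
      rw [Finset.mem_coe, SimpleGraph.mem_edgeFinset, SimpleGraph.mem_edgeSet]
      exact ⟨hadj, hclosed hvC' hadj.symm, hvC'⟩
    · intro v hv w hw heq
      obtain ⟨hvne, hvC⟩ := Finset.mem_erase.mp hv
      obtain ⟨hwne, hwC⟩ := Finset.mem_erase.mp hw
      have hvC' : v ∈ c.supp := (Finset.mem_filter.mp hvC).2
      have hwC' : w ∈ c.supp := (Finset.mem_filter.mp hwC).2
      obtain ⟨-, hdv⟩ := hpred v hvC' hvne
      obtain ⟨-, hdw⟩ := hpred w hwC' hwne
      rw [Sym2.eq_iff] at heq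
      rcases heq with ⟨-, h⟩ | ⟨h1, h2⟩
      · exact h
      · exfalso
        rw [h1] at hdv
        rw [← h2] at hdw
        omega
  have hcard : (univ.filter (· ∈ c.supp)).card ≤ ((univ.filter (· ∈ c.supp)).erase root).card + 1 := by
    have : root ∈ univ.filter (· ∈ c.supp) := Finset.mem_filter.mpr ⟨Finset.mem_univ _, hrootC⟩
    rw [Finset.card_erase_of_mem this]
    omega
  omega

end Aux

/-- Removing the vertex set `C` of one connected component from a finite simple graph:
if `ν` is the criticality parameter of the whole graph and `ν̃` the one of the graph
restricted to the complement of `C`, then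
`(ν̃ − 1)·(1 − (∑_{v∈C} d(v))/ℓ) ≤ ν − 1 + 2/ℓ`. -/


theorem criticality_after_removing_component
    {V : Type*} [Fintype V] (G : SimpleGraph V) [DecidableRel G.Adj]
    (C : Set V) [DecidablePred (· ∈ C)]
    (hC : ∃ c : G.ConnectedComponent, C = c.supp)
    (hℓ : 0 < ∑ v : V, (G.degree v : ℝ))
    (hout : 0 < ∑ v ∈ univ.filter (· ∉ C), (G.degree v : ℝ)) :
    ((∑ v ∈ univ.filter (· ∉ C), (G.degree v : ℝ) * ((G.degree v : ℝ) - 1)) /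
        (∑ v ∈ univ.filter (· ∉ C), (G.degree v : ℝ)) - 1) *
      (1 - (∑ v ∈ univ.filter (· ∈ C), (G.degree v : ℝ)) / (∑ v : V, (G.degree v : ℝ))) ≤
    (∑ v : V, (G.degree v : ℝ) * ((G.degree v : ℝ) - 1)) / (∑ v : V, (G.degree v : ℝ)) - 1 +
      2 / (∑ v : V, (G.degree v : ℝ)) := by
  classical
  set a : ℝ := ∑ v ∈ univ.filter (· ∉ C), (G.degree v : ℝ) with ha
  set b : ℝ := ∑ v ∈ univ.filter (· ∈ C), (G.degree v : ℝ) with hb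
  set S' : ℝ := ∑ v ∈ univ.filter (· ∉ C), (G.degree v : ℝ) * ((G.degree v : ℝ) - 1) with hS'
  set SC : ℝ := ∑ v ∈ univ.filter (· ∈ C), (G.degree v : ℝ) * ((G.degree v : ℝ) - 1) with hSC
  set ℓ : ℝ := ∑ v : V, (G.degree v : ℝ) with hl
  have hsplit : ℓ = b + a := by
    rw [hl, hb, ha, ← Finset.sum_filter_add_sum_filter_not univ (· ∈ C) (fun v => (G.degree v : ℝ))]
  have hSsplit : (∑ v : V, (G.degree v : ℝ) * ((G.degree v : ℝ) - 1)) = SC + S' := by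
    rw [hSC, hS',
      ← Finset.sum_filter_add_sum_filter_not univ (· ∈ C)
        (fun v => (G.degree v : ℝ) * ((G.degree v : ℝ) - 1))]
  -- key inequality : b ≤ SC + 2
  have hkey : b ≤ SC + 2 := by
    have hnat := component_degree_sum_lower G C hC
    have hcast : 2 * ((univ.filter (· ∈ C)).card : ℝ) ≤ b + 2 := by
      rw [hb]
      exact_mod_cast hnat
    have hpt : ∀ v : V, 2 * (G.degree v : ℝ) - 2 ≤ (G.degree v : ℝ) * ((G.degree v : ℝ) - 1) := by
      intro v
      have h01 : G.degree v = 0 ∨ G.degree v = 1 ∨ 2 ≤ G.degree v := by omega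
      rcases h01 with h | h | h
      · rw [h]; norm_num
      · rw [h]; norm_num
      · have : (2 : ℝ) ≤ (G.degree v : ℝ) := by exact_mod_cast h
        nlinarith
    have hSCge : 2 * b - 2 * ((univ.filter (· ∈ C)).card : ℝ) ≤ SC := by
      have hle : ∑ v ∈ univ.filter (· ∈ C), (2 * (G.degree v : ℝ) - 2) ≤ SC :=
        Finset.sum_le_sum fun v _ => hpt v
      have hsum : ∑ v ∈ univ.filter (· ∈ C), (2 * (G.degree v : ℝ) - 2)
          = 2 * b - 2 * ((univ.filter (· ∈ C)).card : ℝ) := by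
        rw [Finset.sum_sub_distrib, ← Finset.mul_sum, Finset.sum_const, nsmul_eq_mul, hb]
        ring
      linarith [hsum ▸ hle]
    linarith
  -- arithmetic conclusion
  have ha0 : a ≠ 0 := ne_of_gt hout
  have hl0 : ℓ ≠ 0 := ne_of_gt hℓ
  have hL : (S' / a - 1) * (1 - b / ℓ) = (S' - a) / ℓ := by
    have hbl : b = ℓ - a := by linarith
    rw [hbl]
    field_simp
    ring
  have hR : (SC + S') / ℓ - 1 + 2 / ℓ = (SC + S' - ℓ + 2) / ℓ := by
    field_simp
  rw [hL, hSsplit, hR]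
  gcongr
  linarith
end

section
/- Let G be a finite simple graph on vertex set V with degree function d, let S ⊆ V, and let G' be the graph obtained from G by deleting every edge having at least one endpoint in S. Write d'(v) for the degree of v in G'. Then: (i) d'(v) ≤ d(v) for all v ∈ V and d'(v) = 0 for v ∈ S; (ii) ∑_{v∈V} d'(v) ≥ ∑_{v∈V} d(v) − 2·∑_{v∈S} d(v); and (iii) if ∑_{v∈V} d(v) − 2·∑_{v∈S} d(v) > 0, then (∑_{v∈V} d'(v)(d'(v)−1))/(∑_{v∈V} d'(v)) ≤ (∑_{v∈V} d(v)(d(v)−1) − ∑_{v∈S} d(v)(d(v)−1))/(∑_{v∈V} d(v) − 2·∑_{v∈S} d(v)), where in (iii) the left-hand side is interpreted as 0 when ∑_{v∈V} d'(v) = 0. -/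
open Finset

private lemma deg_eq_sum {V : Type*} [Fintype V] (H : SimpleGraph V)
    [DecidableRel H.Adj] (v : V) :
    H.degree v = ∑ u : V, if H.Adj v u then 1 else 0 := by
  rw [← SimpleGraph.card_neighborFinset_eq_degree, SimpleGraph.neighborFinset_eq_filter,
    Finset.card_filter]

private lemma nat_mul_sub_one_le {m n : ℕ} (h : m ≤ n) :
    (m : ℝ) * ((m : ℝ) - 1) ≤ (n : ℝ) * ((n : ℝ) - 1) := by
  rcases Nat.eq_zero_or_pos m with hm | hm
  · subst hm
    simp only [Nat.cast_zero, zero_mul]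
    rcases Nat.eq_zero_or_pos n with hn | hn
    · simp [hn]
    · have : (1:ℝ) ≤ n := by exact_mod_cast hn
      nlinarith
  · have h1 : (1:ℝ) ≤ m := by exact_mod_cast hm
    have h2 : (m:ℝ) ≤ n := by exact_mod_cast h
    nlinarith

private lemma nat_mul_sub_one_nonneg (m : ℕ) :
    (0:ℝ) ≤ (m : ℝ) * ((m : ℝ) - 1) := by
  rcases Nat.eq_zero_or_pos m with hm | hm
  · simp [hm]
  · have h1 : (1:ℝ) ≤ m := by exact_mod_cast hm
    nlinarith

/-- Deleting all edges incident to a set `S` of vertices: monotonicity of degrees,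
a lower bound on the total degree, and comparison of the criticality parameters. -/
theorem delete_incident_edges_degree_criticality
    {V : Type*} [Fintype V] (G G' : SimpleGraph V)
    [DecidableRel G.Adj] [DecidableRel G'.Adj]
    (S : Set V) [DecidablePred (· ∈ S)]
    (hG' : ∀ u v, G'.Adj u v ↔ G.Adj u v ∧ u ∉ S ∧ v ∉ S) :
    (∀ v : V, G'.degree v ≤ G.degree v) ∧
    (∀ v ∈ S, G'.degree v = 0) ∧
    ((∑ v : V, (G.degree v : ℤ)) - 2 * ∑ v ∈ univ.filter (· ∈ S), (G.degree v : ℤ)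
        ≤ ∑ v : V, (G'.degree v : ℤ)) ∧
    ((0 : ℝ) < (∑ v : V, (G.degree v : ℝ))
        - 2 * ∑ v ∈ univ.filter (· ∈ S), (G.degree v : ℝ) →
      (∑ v : V, (G'.degree v : ℝ) * ((G'.degree v : ℝ) - 1)) /
          (∑ v : V, (G'.degree v : ℝ)) ≤
        ((∑ v : V, (G.degree v : ℝ) * ((G.degree v : ℝ) - 1))
            - ∑ v ∈ univ.filter (· ∈ S), (G.degree v : ℝ) * ((G.degree v : ℝ) - 1)) /
          ((∑ v : V, (G.degree v : ℝ))
            - 2 * ∑ v ∈ univ.filter (· ∈ S), (G.degree v : ℝ))) := by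
  -- (i)
  have hmono : ∀ v : V, G'.degree v ≤ G.degree v := by
    intro v
    apply Finset.card_le_card
    intro u hu
    rw [SimpleGraph.mem_neighborFinset] at hu ⊢
    exact ((hG' v u).mp hu).1
  -- (ii)
  have hzero : ∀ v ∈ S, G'.degree v = 0 := by
    intro v hv
    rw [← SimpleGraph.card_neighborFinset_eq_degree, Finset.card_eq_zero]
    ext u
    simp only [SimpleGraph.mem_neighborFinset, Finset.notMem_empty, iff_false]
    intro h
    exact ((hG' v u).mp h).2.1 hv
  -- key sum inequality in ℕ
  have hsum_nat : ∑ v : V, G.degree v ≤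
      (∑ v : V, G'.degree v) + 2 * ∑ v ∈ univ.filter (· ∈ S), G.degree v := by
    have key : ∀ v u : V, (if G.Adj v u then 1 else 0) ≤
        (if G'.Adj v u then 1 else 0) +
        ((if v ∈ S then (if G.Adj v u then 1 else 0) else 0) +
         (if u ∈ S then (if G.Adj v u then 1 else 0) else 0)) := by
      intro v u
      by_cases h : G.Adj v u
      · by_cases hv : v ∈ S
        · simp only [h, if_true, hv]
          split_ifs <;> omega
        · by_cases hu : u ∈ S
          · simp only [h, if_true, hv, hu, if_false]
            split_ifs <;> omega
          · simp [h, hv, hu, (hG' v u).mpr ⟨h, hv, hu⟩]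
      · simp [h]
    calc ∑ v : V, G.degree v = ∑ v : V, ∑ u : V, if G.Adj v u then 1 else 0 := by
          simp [deg_eq_sum]
      _ ≤ ∑ v : V, ∑ u : V, ((if G'.Adj v u then 1 else 0) +
            ((if v ∈ S then (if G.Adj v u then 1 else 0) else 0) +
             (if u ∈ S then (if G.Adj v u then 1 else 0) else 0))) := by
          apply Finset.sum_le_sum; intro v _
          apply Finset.sum_le_sum; intro u _
          exact key v u
      _ = (∑ v : V, G'.degree v) +
          ((∑ v ∈ univ.filter (· ∈ S), G.degree v) +
           (∑ v ∈ univ.filter (· ∈ S), G.degree v)) := by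
          simp only [Finset.sum_add_distrib]
          congr 1
          · simp [deg_eq_sum]
          congr 1
          · have hB : ∀ v : V, (∑ u : V, if v ∈ S then (if G.Adj v u then 1 else 0) else 0)
                = if v ∈ S then G.degree v else 0 := by
              intro v
              split_ifs with hv
              · rw [deg_eq_sum]
              · simp
            rw [Finset.sum_congr rfl fun v _ => hB v, ← Finset.sum_filter]
          · rw [Finset.sum_comm]
            have hC : ∀ u : V, (∑ v : V, if u ∈ S then (if G.Adj v u then 1 else 0) else 0)
                = if u ∈ S then G.degree u else 0 := by
              intro u
              split_ifs with hu
              · rw [deg_eq_sum]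
                apply Finset.sum_congr rfl
                intro v _
                simp [SimpleGraph.adj_comm]
              · simp
            rw [Finset.sum_congr rfl fun u _ => hC u, ← Finset.sum_filter]
      _ = (∑ v : V, G'.degree v) + 2 * ∑ v ∈ univ.filter (· ∈ S), G.degree v := by ring
  have hsum_int : (∑ v : V, (G.degree v : ℤ)) - 2 * ∑ v ∈ univ.filter (· ∈ S), (G.degree v : ℤ)
      ≤ ∑ v : V, (G'.degree v : ℤ) := by
    have h' : ((∑ v : V, G.degree v : ℕ) : ℤ) ≤
        (((∑ v : V, G'.degree v) + 2 * ∑ v ∈ univ.filter (· ∈ S), G.degree v : ℕ) : ℤ) :=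
      Nat.cast_le.mpr hsum_nat
    push_cast at h'
    linarith
  refine ⟨hmono, hzero, hsum_int, ?_⟩
  -- (iii)
  intro hpos
  set BS : ℝ := ∑ v ∈ univ.filter (· ∈ S), (G.degree v : ℝ) with hBS
  have hsum_real : (∑ v : V, (G.degree v : ℝ)) - 2 * BS ≤ ∑ v : V, (G'.degree v : ℝ) := by
    have h' : ((∑ v : V, G.degree v : ℕ) : ℝ) ≤
        (((∑ v : V, G'.degree v) + 2 * ∑ v ∈ univ.filter (· ∈ S), G.degree v : ℕ) : ℝ) :=
      Nat.cast_le.mpr hsum_nat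
    push_cast at h'
    rw [hBS]
    linarith
  have hN'le : (∑ v : V, (G'.degree v : ℝ) * ((G'.degree v : ℝ) - 1)) ≤
      (∑ v : V, (G.degree v : ℝ) * ((G.degree v : ℝ) - 1))
        - ∑ v ∈ univ.filter (· ∈ S), (G.degree v : ℝ) * ((G.degree v : ℝ) - 1) := by
    have e1 := Finset.sum_filter_add_sum_filter_not univ (· ∈ S)
      (fun v => (G.degree v : ℝ) * ((G.degree v : ℝ) - 1))
    have e2 := Finset.sum_filter_add_sum_filter_not univ (· ∈ S)
      (fun v => (G'.degree v : ℝ) * ((G'.degree v : ℝ) - 1))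
    have h1 : ∑ v ∈ univ.filter (· ∈ S), (G'.degree v : ℝ) * ((G'.degree v : ℝ) - 1) = 0 := by
      apply Finset.sum_eq_zero
      intro v hv
      rw [Finset.mem_filter] at hv
      rw [hzero v hv.2]
      simp
    have h2 : ∑ v ∈ univ.filter (¬ · ∈ S), (G'.degree v : ℝ) * ((G'.degree v : ℝ) - 1) ≤
        ∑ v ∈ univ.filter (¬ · ∈ S), (G.degree v : ℝ) * ((G.degree v : ℝ) - 1) := by
      apply Finset.sum_le_sum
      intro v _
      exact nat_mul_sub_one_le (hmono v)
    linarith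
  have hN'nonneg : (0:ℝ) ≤ ∑ v : V, (G'.degree v : ℝ) * ((G'.degree v : ℝ) - 1) :=
    Finset.sum_nonneg fun v _ => nat_mul_sub_one_nonneg _
  exact div_le_div₀ (le_trans hN'nonneg hN'le) hN'le hpos hsum_real
end
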